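/- Let F be a convex set of functions (viewed as a convex subset of R^n via evaluation at fixed design points), and for f ∈ F and t ≥ 0 let W(f,t) be the Gaussian width of the ball B(f,t) = {g ∈ F : ||g - f||_n ≤ t}. Then the map t ↦ W(f,t)/t is nonincreasing on (0, ∞). -/

import Mathlib

open MeasureTheory

/-- The empirical `L²` norm `‖f‖_n = √((1/n) Σᵢ f(Xᵢ)²)` of a vector of evaluations. -/
noncomputable def empNorm (n : ℕ) (f : Fin n → ℝ) : ℝ :=
  Real.sqrt ((n : ℝ)⁻¹ * ∑ i, (f i) ^ 2)

/-- The Gaussian width `W(G) = E sup_{g ∈ G} (1/n) Σᵢ ξᵢ gᵢ` of a set `G ⊆ ℝⁿ`,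
where `ξ₁, …, ξₙ` are i.i.d. standard Gaussians. -/
noncomputable def gaussWidth (n : ℕ) (G : Set (Fin n → ℝ)) : ℝ :=
  ∫ ξ : Fin n → ℝ, sSup ((fun g => (n : ℝ)⁻¹ * ∑ i, ξ i * g i) '' G)
    ∂(Measure.pi fun _ : Fin n => ProbabilityTheory.gaussianReal 0 1)

/-- The empirical ball of radius `t` around `f` inside the class `F`. -/
def empBall (n : ℕ) (F : Set (Fin n → ℝ)) (f : Fin n → ℝ) (t : ℝ) : Set (Fin n → ℝ) :=
  {g ∈ F | empNorm n (g - f) ≤ t}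

open ProbabilityTheory Real
lemma integrable_id_gauss : Integrable (fun x : ℝ => x) (ProbabilityTheory.gaussianReal 0 1) := by
  rw [ProbabilityTheory.gaussianReal_of_var_ne_zero 0 one_ne_zero]
  rw [integrable_withDensity_iff (ProbabilityTheory.measurable_gaussianPDF 0 1)
    (Filter.Eventually.of_forall fun x => ENNReal.ofReal_lt_top)]
  have h : (fun x : ℝ => x * (ProbabilityTheory.gaussianPDF 0 1 x).toReal)
      = fun x => (Real.sqrt (2 * Real.pi))⁻¹ * (x * Real.exp (-(2⁻¹) * x ^ 2)) := by
    funext x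
    rw [ProbabilityTheory.gaussianPDF_def,
      ENNReal.toReal_ofReal (ProbabilityTheory.gaussianPDFReal_nonneg 0 1 x),
      ProbabilityTheory.gaussianPDFReal_def]
    norm_num
    ring_nf
  rw [h]
  exact (integrable_mul_exp_neg_mul_sq (by norm_num : (0:ℝ) < 2⁻¹)).const_mul _

lemma integral_id_gauss : ∫ x, x ∂(gaussianReal 0 1) = 0 := by
  have hmap : (gaussianReal 0 1).map (fun x : ℝ => -1 * x) = gaussianReal 0 1 := by
    have h := gaussianReal_map_const_mul (μ := 0) (v := 1) (-1)
    convert h using 2 <;> norm_num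
  have h1 : ∫ x, x ∂(gaussianReal 0 1) = ∫ x, (-1 : ℝ) * x ∂(gaussianReal 0 1) := by
    conv_lhs => rw [← hmap]
    exact integral_map (by fun_prop) aestronglyMeasurable_id
  simp only [neg_one_mul] at h1
  rw [integral_neg] at h1
  linarith


noncomputable def piGauss (n : ℕ) : Measure (Fin n → ℝ) :=
  Measure.pi fun _ : Fin n => gaussianReal 0 1

instance (n : ℕ) : IsProbabilityMeasure (piGauss n) := by
  unfold piGauss; infer_instance

lemma map_eval_piGauss {n : ℕ} (i : Fin n) :
    (piGauss n).map (fun ξ => ξ i) = gaussianReal 0 1 := by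
  ext A hA
  rw [Measure.map_apply (measurable_pi_apply i) hA]
  have : (fun ξ : Fin n → ℝ => ξ i) ⁻¹' A
      = Set.pi Set.univ (Function.update (fun _ => Set.univ) i A) := by
    rw [← Set.eval_preimage]
  rw [this, piGauss, Measure.pi_pi]
  rw [Finset.prod_eq_single i]
  · simp
  · intro j _ hj; simp [Function.update_of_ne hj]
  · simp

lemma integrable_eval_piGauss {n : ℕ} (i : Fin n) :
    Integrable (fun ξ : Fin n → ℝ => ξ i) (piGauss n) := by
  have h : Integrable (fun x : ℝ => x) ((piGauss n).map (fun ξ => ξ i)) := by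
    rw [map_eval_piGauss i]
    exact integrable_id_gauss
  exact (integrable_map_measure aestronglyMeasurable_id
    (measurable_pi_apply i).aemeasurable).mp h

lemma integral_eval_piGauss {n : ℕ} (i : Fin n) :
    ∫ ξ, ξ i ∂(piGauss n) = 0 := by
  have h : ∫ x, x ∂((piGauss n).map (fun ξ => ξ i)) = ∫ ξ, ξ i ∂(piGauss n) :=
    integral_map (measurable_pi_apply i).aemeasurable aestronglyMeasurable_id
  rw [map_eval_piGauss i] at h
  rw [← h, integral_id_gauss]


lemma empNorm_smul (n : ℕ) (c : ℝ) (v : Fin n → ℝ) :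
    empNorm n (c • v) = |c| * empNorm n v := by
  unfold empNorm
  rw [← Real.sqrt_sq_eq_abs, ← Real.sqrt_mul (sq_nonneg c)]
  congr 1
  simp only [Pi.smul_apply, smul_eq_mul, mul_pow]
  rw [← Finset.mul_sum]
  ring

lemma self_mem_empBall {n : ℕ} {F : Set (Fin n → ℝ)} {f : Fin n → ℝ} (hf : f ∈ F)
    {r : ℝ} (hr : 0 ≤ r) : f ∈ empBall n F f r := by
  refine ⟨hf, ?_⟩
  simp [empNorm]
  exact hr

lemma coord_bound {n : ℕ} {F : Set (Fin n → ℝ)} {f g : Fin n → ℝ} {r : ℝ}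
    (hg : g ∈ empBall n F f r) (hr : 0 ≤ r) (i : Fin n) :
    |g i| ≤ |f i| + Real.sqrt n * r := by
  have hn : (0:ℝ) < n := by
    have := i.pos
    exact_mod_cast this
  obtain ⟨-, hnorm⟩ := hg
  unfold empNorm at hnorm
  have h1 : (n : ℝ)⁻¹ * ∑ j, ((g - f) j) ^ 2 ≤ r ^ 2 := by
    have h0 : 0 ≤ (n : ℝ)⁻¹ * ∑ j, ((g - f) j) ^ 2 :=
      mul_nonneg (by positivity) (Finset.sum_nonneg fun j _ => sq_nonneg _)
    have hsq := Real.sq_sqrt h0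
    nlinarith [Real.sqrt_nonneg ((n : ℝ)⁻¹ * ∑ j, ((g - f) j) ^ 2)]
  have h2 : (g i - f i) ^ 2 ≤ (n:ℝ) * r ^ 2 := by
    have hle : ((g - f) i) ^ 2 ≤ ∑ j, ((g - f) j) ^ 2 :=
      Finset.single_le_sum (f := fun j => ((g - f) j)^2) (fun j _ => sq_nonneg _)
        (Finset.mem_univ i)
    have h4 : ∑ j, ((g - f) j) ^ 2 ≤ (n:ℝ) * r ^ 2 := by
      have := mul_le_mul_of_nonneg_left h1 (le_of_lt hn)
      rwa [← mul_assoc, mul_inv_cancel₀ (ne_of_gt hn), one_mul] at this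
    simp only [Pi.sub_apply] at hle h4
    linarith
  have h3 : |g i - f i| ≤ Real.sqrt n * r := by
    rw [← Real.sqrt_sq_eq_abs]
    calc Real.sqrt ((g i - f i)^2) ≤ Real.sqrt ((n:ℝ) * r^2) := Real.sqrt_le_sqrt h2
      _ = Real.sqrt n * r := by
          rw [Real.sqrt_mul (by positivity), Real.sqrt_sq hr]
  calc |g i| = |f i + (g i - f i)| := by ring_nf
    _ ≤ |f i| + |g i - f i| := abs_add_le _ _
    _ ≤ |f i| + Real.sqrt n * r := by linarith

lemma absL_le {n : ℕ} (ξ g b : Fin n → ℝ) (hb : ∀ i, |g i| ≤ b i) :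
    |(n:ℝ)⁻¹ * ∑ i, ξ i * g i| ≤ (n:ℝ)⁻¹ * ∑ i, |ξ i| * b i := by
  rw [abs_mul, abs_inv, Nat.abs_cast]
  refine mul_le_mul_of_nonneg_left ?_ (by positivity)
  calc |∑ i, ξ i * g i| ≤ ∑ i, |ξ i * g i| := Finset.abs_sum_le_sum_abs _ _
    _ ≤ ∑ i, |ξ i| * b i := by
        refine Finset.sum_le_sum fun i _ => ?_
        rw [abs_mul]
        exact mul_le_mul_of_nonneg_left (hb i) (abs_nonneg _)


section
variable {n : ℕ} {F : Set (Fin n → ℝ)} {f : Fin n → ℝ} {r : ℝ}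

noncomputable def supW (n : ℕ) (G : Set (Fin n → ℝ)) (ξ : Fin n → ℝ) : ℝ :=
  sSup ((fun g => (n : ℝ)⁻¹ * ∑ i, ξ i * g i) '' G)

lemma coordb_abs {f : Fin n → ℝ} (hr : 0 ≤ r) (i : Fin n) :
    |f i| ≤ |f i| + Real.sqrt n * r := by
  have : 0 ≤ Real.sqrt n * r := mul_nonneg (Real.sqrt_nonneg _) hr
  linarith

lemma bddAbove_img (hf : f ∈ F) (hr : 0 ≤ r) (ξ : Fin n → ℝ) :
    BddAbove ((fun g => (n : ℝ)⁻¹ * ∑ i, ξ i * g i) '' empBall n F f r) := by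
  refine ⟨(n:ℝ)⁻¹ * ∑ i, |ξ i| * (|f i| + Real.sqrt n * r), ?_⟩
  rintro y ⟨g, hg, rfl⟩
  exact le_of_abs_le (absL_le ξ g _ (coord_bound hg hr))

lemma abs_supW_le (hf : f ∈ F) (hr : 0 ≤ r) (ξ : Fin n → ℝ) :
    |supW n (empBall n F f r) ξ| ≤ (n:ℝ)⁻¹ * ∑ i, |ξ i| * (|f i| + Real.sqrt n * r) := by
  rw [abs_le]
  constructor
  · have h1 : (n:ℝ)⁻¹ * ∑ i, ξ i * f i ≤ supW n (empBall n F f r) ξ :=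
      le_csSup (bddAbove_img hf hr ξ) ⟨f, self_mem_empBall hf hr, rfl⟩
    have h2 := absL_le ξ f (fun i => |f i| + Real.sqrt n * r) (coordb_abs hr)
    have := neg_abs_le ((n:ℝ)⁻¹ * ∑ i, ξ i * f i)
    linarith
  · refine csSup_le ⟨_, ⟨f, self_mem_empBall hf hr, rfl⟩⟩ ?_
    rintro y ⟨g, hg, rfl⟩
    exact le_of_abs_le (absL_le ξ g _ (coord_bound hg hr))

lemma supW_lip_aux (hf : f ∈ F) (hr : 0 ≤ r) (ξ ζ : Fin n → ℝ) :
    supW n (empBall n F f r) ξ ≤ supW n (empBall n F f r) ζ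
      + ((n:ℝ)⁻¹ * ∑ i, (|f i| + Real.sqrt n * r)) * dist ξ ζ := by
  refine csSup_le ⟨_, ⟨f, self_mem_empBall hf hr, rfl⟩⟩ ?_
  rintro y ⟨g, hg, rfl⟩
  have h1 : (n:ℝ)⁻¹ * ∑ i, ζ i * g i ≤ supW n (empBall n F f r) ζ :=
    le_csSup (bddAbove_img hf hr ζ) ⟨g, hg, rfl⟩
  have h2 : |(n:ℝ)⁻¹ * ∑ i, (ξ - ζ) i * g i|
      ≤ (n:ℝ)⁻¹ * ∑ i, |(ξ - ζ) i| * (|f i| + Real.sqrt n * r) :=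
    absL_le (ξ - ζ) g _ (coord_bound hg hr)
  have h3 : ∑ i, |(ξ - ζ) i| * (|f i| + Real.sqrt n * r)
      ≤ ∑ i, dist ξ ζ * (|f i| + Real.sqrt n * r) := by
    refine Finset.sum_le_sum fun i _ => mul_le_mul_of_nonneg_right ?_
      (by positivity)
    have := dist_le_pi_dist ξ ζ i
    rwa [Real.dist_eq] at this
  have hsplit : (n:ℝ)⁻¹ * ∑ i, ξ i * g i
      = (n:ℝ)⁻¹ * ∑ i, ζ i * g i + (n:ℝ)⁻¹ * ∑ i, (ξ - ζ) i * g i := by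
    rw [← mul_add, ← Finset.sum_add_distrib]
    congr 1
    refine Finset.sum_congr rfl fun i _ => ?_
    simp only [Pi.sub_apply]
    ring
  have h4 : (n:ℝ)⁻¹ * ∑ i, dist ξ ζ * (|f i| + Real.sqrt n * r)
      = ((n:ℝ)⁻¹ * ∑ i, (|f i| + Real.sqrt n * r)) * dist ξ ζ := by
    rw [← Finset.mul_sum]
    ring
  have h5 : (n:ℝ)⁻¹ * ∑ i, |(ξ - ζ) i| * (|f i| + Real.sqrt n * r)
      ≤ (n:ℝ)⁻¹ * ∑ i, dist ξ ζ * (|f i| + Real.sqrt n * r) :=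
    mul_le_mul_of_nonneg_left h3 (by positivity)
  have := abs_le.mp h2
  linarith

lemma continuous_supW (hf : f ∈ F) (hr : 0 ≤ r) :
    Continuous (supW n (empBall n F f r)) := by
  set C : ℝ := (n:ℝ)⁻¹ * ∑ i, (|f i| + Real.sqrt n * r) with hC
  have hC0 : 0 ≤ C := by
    refine mul_nonneg (by positivity) (Finset.sum_nonneg fun i _ => ?_)
    positivity
  refine (LipschitzWith.of_dist_le_mul (K := C.toNNReal) fun ξ ζ => ?_).continuous
  rw [Real.dist_eq, Real.coe_toNNReal C hC0, abs_sub_le_iff, hC]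
  constructor
  · have := supW_lip_aux hf hr ξ ζ
    linarith
  · have := supW_lip_aux hf hr ζ ξ
    rw [dist_comm ζ ξ] at this
    linarith
end


lemma integrable_supW {n : ℕ} {F : Set (Fin n → ℝ)} {f : Fin n → ℝ} {r : ℝ} (hf : f ∈ F)
    (hr : 0 ≤ r) : Integrable (supW n (empBall n F f r)) (piGauss n) := by
  have hM : Integrable
      (fun ξ : Fin n → ℝ => (n:ℝ)⁻¹ * ∑ i, |ξ i| * (|f i| + Real.sqrt n * r))
      (piGauss n) := by
    refine Integrable.const_mul ?_ _
    exact integrable_finset_sum _ fun i _ =>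
      ((integrable_eval_piGauss i).abs.mul_const _)
  exact hM.mono' (continuous_supW hf hr).aestronglyMeasurable
    (Filter.Eventually.of_forall fun ξ => abs_supW_le hf hr ξ)

lemma integrable_Lf {n : ℕ} (f : Fin n → ℝ) :
    Integrable (fun ξ : Fin n → ℝ => (n:ℝ)⁻¹ * ∑ i, ξ i * f i) (piGauss n) := by
  refine Integrable.const_mul ?_ _
  exact integrable_finset_sum _ fun i _ => ((integrable_eval_piGauss i).mul_const _)

lemma integral_Lf {n : ℕ} (f : Fin n → ℝ) :
    ∫ ξ, (n:ℝ)⁻¹ * ∑ i, ξ i * f i ∂(piGauss n) = 0 := by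
  rw [integral_const_mul, integral_finset_sum _
    (fun i _ => (integrable_eval_piGauss i).mul_const _)]
  have : ∀ i : Fin n, ∫ ξ, ξ i * f i ∂(piGauss n) = 0 := fun i => by
    rw [integral_mul_const, integral_eval_piGauss i, zero_mul]
  simp [this]

/-- For a convex class `F` and `f ∈ F`, the map `t ↦ W(B(f,t))/t` is nonincreasing
on `(0, ∞)`. -/
theorem gaussWidth_ratio_antitone (n : ℕ) (F : Set (Fin n → ℝ))
    (hF : Convex ℝ F) (f : Fin n → ℝ) (hf : f ∈ F)
    (s t : ℝ) (hs : 0 < s) (hst : s ≤ t) :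
    gaussWidth n (empBall n F f t) / t ≤ gaussWidth n (empBall n F f s) / s := by
  have ht : 0 < t := lt_of_lt_of_le hs hst
  set c : ℝ := s / t with hc
  have hc0 : 0 ≤ c := by positivity
  have hc1 : c ≤ 1 := div_le_one_of_le₀ hst ht.le
  set L : (Fin n → ℝ) → (Fin n → ℝ) → ℝ := fun ξ g => (n:ℝ)⁻¹ * ∑ i, ξ i * g i with hL
  -- key pointwise inequality
  have key : ∀ ξ, s * supW n (empBall n F f t) ξ
      ≤ t * supW n (empBall n F f s) ξ - (t - s) * L ξ f := by
    intro ξ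
    have hb : supW n (empBall n F f t) ξ
        ≤ (t * supW n (empBall n F f s) ξ - (t - s) * L ξ f) / s := by
      refine csSup_le ⟨_, ⟨f, self_mem_empBall hf ht.le, rfl⟩⟩ ?_
      rintro y ⟨g, hg, rfl⟩
      set h : Fin n → ℝ := (1 - c) • f + c • g with hh
      have hhF : h ∈ F := hF hf hg.1 (by linarith) hc0 (by ring)
      have hdiff : h - f = c • (g - f) := by
        funext i
        simp only [hh, Pi.add_apply, Pi.sub_apply, Pi.smul_apply, smul_eq_mul]
        ring
      have hhball : h ∈ empBall n F f s := by
        refine ⟨hhF, ?_⟩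
        rw [hdiff, empNorm_smul, abs_of_nonneg hc0]
        calc c * empNorm n (g - f) ≤ c * t :=
              mul_le_mul_of_nonneg_left hg.2 hc0
          _ = s := by rw [hc, div_mul_cancel₀ _ ht.ne']
      have hle : L ξ h ≤ supW n (empBall n F f s) ξ :=
        le_csSup (bddAbove_img hf hs.le ξ) ⟨h, hhball, rfl⟩
      have hsum : ∀ i, ξ i * ((1 - c) • f + c • g) i
          = (1 - c) * (ξ i * f i) + c * (ξ i * g i) := fun i => by
        simp only [Pi.add_apply, Pi.smul_apply, smul_eq_mul]; ring
      have hLh : L ξ h = (1 - c) * L ξ f + c * L ξ g := by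
        simp only [hL, hh]
        rw [Finset.sum_congr rfl fun i _ => hsum i, Finset.sum_add_distrib,
          ← Finset.mul_sum, ← Finset.mul_sum]
        ring
      have hct : t * c = s := by rw [hc, mul_div_cancel₀ _ ht.ne']
      rw [le_div_iff₀ hs]
      show L ξ g * s ≤ t * supW n (empBall n F f s) ξ - (t - s) * L ξ f
      have h5 := mul_le_mul_of_nonneg_left hle ht.le
      rw [hLh] at h5
      have h6 : t * ((1 - c) * L ξ f + c * L ξ g) = (t - s) * L ξ f + s * L ξ g := by
        rw [← hct]; ring
      rw [h6] at h5
      linarith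
    have := mul_le_mul_of_nonneg_left hb hs.le
    rwa [mul_div_cancel₀ _ (ne_of_gt hs)] at this
  -- integrate
  have hWt : gaussWidth n (empBall n F f t) = ∫ ξ, supW n (empBall n F f t) ξ ∂(piGauss n) := rfl
  have hWs : gaussWidth n (empBall n F f s) = ∫ ξ, supW n (empBall n F f s) ξ ∂(piGauss n) := rfl
  have hint : ∫ ξ, s * supW n (empBall n F f t) ξ ∂(piGauss n)
      ≤ ∫ ξ, (t * supW n (empBall n F f s) ξ - (t - s) * L ξ f) ∂(piGauss n) := by
    refine integral_mono ((integrable_supW hf ht.le).const_mul s)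
      (((integrable_supW hf hs.le).const_mul t).sub ((integrable_Lf f).const_mul _)) key
  rw [integral_const_mul] at hint
  rw [integral_sub ((integrable_supW hf hs.le).const_mul t) ((integrable_Lf f).const_mul _),
    integral_const_mul, integral_const_mul, integral_Lf, mul_zero, sub_zero] at hint
  rw [hWt, hWs, div_le_div_iff₀ ht hs]
  linarith
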